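/- Let k be a field, X a finitely generated free abelian group, A = S_k(X) the symmetric algebra of X over k, and α ∈ X, α̌ ∈ Hom(X,ℤ) with ⟨α,α̌⟩ = 2; let s_α be the k-algebra automorphism of A induced by x ↦ x − ⟨x,α̌⟩α, and Δ_α : A → A the unique map with α·Δ_α(f) = f − s_α(f) for all f ∈ A. Let V be a finite-dimensional k-vector space, ρ : A → End_k(V) a k-algebra homomorphism, c ∈ k, and T ∈ End_k(V) an operator satisfying T∘ρ(f) − ρ(s_α(f))∘T = c·ρ(Δ_α(f)) for all f ∈ A. If λ : A → k is a k-algebra homomorphism with λ∘s_α ≠ λ, then λ(α) ≠ 0, T maps the generalized weight space V_λ into V_λ + V_{λ∘s_α}, and more precisely for every v ∈ V_λ one may write Tv = w + u with w ∈ V_λ, u ∈ V_{λ∘s_α}, and ρ(α)(w) = c·v. -/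

import Mathlib

open scoped BigOperators

/-- The embedding of the free abelian group `X = (Fin n → ℤ)` into its symmetric algebra
`S_k(X) = k[X_1,…,X_n]` over `k`. -/
noncomputable def symEmb (k : Type*) [Field k] (n : ℕ) (x : Fin n → ℤ) :
    MvPolynomial (Fin n) k :=
  ∑ i, x i • MvPolynomial.X i

/-- The generalized weight space of a weight `lam : A → k` in a representation
`ρ : A → End_k(V)`. -/
def genWt {k V A : Type*} [Field k] [AddCommGroup V] [Module k V]
    [CommRing A] [Algebra k A]
    (ρ : A →ₐ[k] Module.End k V) (lam : A →ₐ[k] k) : Set V :=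
  {v | ∀ f : A, ∃ m : ℕ, ((ρ f - lam f • (1 : Module.End k V)) ^ m) v = 0}

private lemma eig_pow {k V : Type*} [Field k] [AddCommGroup V] [Module k V]
    (N : Module.End k V) (e : k) (x : V) (h : N x = e • x) (p : ℕ) :
    (N ^ p) x = e ^ p • x := by
  induction p with
  | zero => simp
  | succ p ih =>
      rw [pow_succ, Module.End.mul_apply, h, map_smul, ih, smul_smul, pow_succ, mul_comm]

private lemma nilp_coprime {k V : Type*} [Field k] [AddCommGroup V] [Module k V]
    (N : Module.End k V) (d : k) (hd : d ≠ 0) (p : ℕ) :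
    ∀ (m : ℕ) (x : V), (N ^ p) x = 0 → ((N + d • 1) ^ m) x = 0 → x = 0 := by
  intro m
  induction m with
  | zero => intro x _ h; simpa using h
  | succ m ih =>
      intro x hN h
      have hcomm : (N ^ p) * (N + d • 1) = (N + d • 1) * (N ^ p) := by
        have : Commute N (N + d • 1) := by
          refine (Commute.refl N).add_right ?_
          exact (Commute.one_right N).smul_right d
        exact (this.pow_left p).eq
      have h1 : ((N + d • 1) ^ m) ((N + d • 1) x) = 0 := by
        rw [← Module.End.mul_apply, ← pow_succ]; exact h
      have h2 : (N ^ p) ((N + d • 1) x) = 0 := by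
        rw [← Module.End.mul_apply, hcomm, Module.End.mul_apply, hN, map_zero]
      have h3 := ih _ h2 h1
      have h4 : N x = (-d) • x := by
        have h5 : N x + d • x = 0 := by
          simpa [LinearMap.add_apply, LinearMap.smul_apply, Module.End.one_apply] using h3
        rw [neg_smul, eq_neg_iff_add_eq_zero]; exact h5
      have h6 := eig_pow N (-d) x h4 p
      rw [hN] at h6
      have h7 : (-d) ^ p ≠ 0 := pow_ne_zero _ (neg_ne_zero.mpr hd)
      rcases smul_eq_zero.mp h6.symm with h | h
      · exact absurd h h7
      · exact h

/-- With `A = S_k(X)`, `α`, `α̌`, `s_α`, `Δ_α`, `ρ`, `c`, `T` as in the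
preceding setting: if `λ : A → k` is an algebra map with `λ∘s_α ≠ λ`, then `λ(α) ≠ 0`, and
`T` maps the generalized weight space `V_λ` into `V_λ + V_{λ∘s_α}`; more precisely every
`v ∈ V_λ` has `Tv = w + u` with `w ∈ V_λ`, `u ∈ V_{λ∘s_α}` and `ρ(α)(w) = c·v`. -/
theorem bgg_commutation_moved_weight
    {k : Type*} [Field k] (n : ℕ)
    (α : Fin n → ℤ) (acheck : (Fin n → ℤ) →+ ℤ) (h2 : acheck α = 2)
    (s : MvPolynomial (Fin n) k ≃ₐ[k] MvPolynomial (Fin n) k)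
    (hs : ∀ x : Fin n → ℤ, s (symEmb k n x) = symEmb k n (x - acheck x • α))
    (Δ : MvPolynomial (Fin n) k → MvPolynomial (Fin n) k)
    (hΔ : ∀ f, symEmb k n α * Δ f = f - s f)
    {V : Type*} [AddCommGroup V] [Module k V] [FiniteDimensional k V]
    (ρ : MvPolynomial (Fin n) k →ₐ[k] Module.End k V)
    (c : k) (T : Module.End k V)
    (hT : ∀ f, T * ρ f - ρ (s f) * T = c • ρ (Δ f))
    (lam : MvPolynomial (Fin n) k →ₐ[k] k)
    (hlam : lam.comp s.toAlgHom ≠ lam) :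
    lam (symEmb k n α) ≠ 0 ∧
    ∀ v ∈ genWt ρ lam,
      ∃ w ∈ genWt ρ lam, ∃ u ∈ genWt ρ (lam.comp s.toAlgHom),
        T v = w + u ∧ ρ (symEmb k n α) w = c • v := by
  classical
  set μA := lam.comp s.toAlgHom with hμAdef
  have hμ : ∀ f : MvPolynomial (Fin n) k, μA f = lam (s f) := by intro f; simp [hμAdef]
  -- the witness where lam and μA differ
  have hf : ∃ f : MvPolynomial (Fin n) k, lam (s f) ≠ lam f := by
    by_contra hc
    push_neg at hc
    exact hlam (AlgHom.ext fun f => by simpa [hμAdef] using hc f)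
  obtain ⟨f₁, hf₁⟩ := hf
  -- Part 1 : lam α ≠ 0
  have hla : lam (symEmb k n α) ≠ 0 := by
    intro h0
    apply hf₁
    have h3 := congrArg lam (hΔ f₁)
    rw [map_mul, map_sub, h0, zero_mul] at h3
    exact (sub_eq_zero.mp h3.symm).symm
  -- the involution
  have hX : ∀ i : Fin n, symEmb k n (Pi.single i 1) = MvPolynomial.X i := by
    intro i
    rw [symEmb, Finset.sum_eq_single i]
    · simp
    · intro j _ hj; rw [Pi.single_eq_of_ne hj, zero_smul]
    · intro h; exact absurd (Finset.mem_univ i) h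
  have hss : ∀ x : Fin n → ℤ, s (s (symEmb k n x)) = symEmb k n x := by
    intro x
    rw [hs, hs]
    congr 1
    have h3 : acheck (x - acheck x • α) = -acheck x := by
      rw [map_sub, map_zsmul, h2, smul_eq_mul]; ring
    rw [h3]
    simp [sub_smul]
  have hinv : ∀ f : MvPolynomial (Fin n) k, s (s f) = f := by
    have hcomp : (s.toAlgHom.comp s.toAlgHom) = AlgHom.id k (MvPolynomial (Fin n) k) := by
      apply MvPolynomial.algHom_ext
      intro i
      simp only [AlgHom.comp_apply, AlgHom.id_apply, AlgEquiv.toAlgHom_eq_coe, AlgHom.coe_coe]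
      rw [← hX i]; exact hss _
    intro f
    have := congrArg (fun φ => φ f) hcomp
    simpa using this
  -- algebra facts
  have hsub : ∀ (g : MvPolynomial (Fin n) k) (e : k), ρ (g - algebraMap k (MvPolynomial (Fin n) k) e) = ρ g - e • (1 : Module.End k V) := by
    intro g e
    rw [map_sub, AlgHom.commutes]
    congr 1
  have hCalg : ∀ (e : k) (g : MvPolynomial (Fin n) k), ρ (algebraMap k (MvPolynomial (Fin n) k) e * g) = e • ρ g := by
    intro e g
    rw [map_mul, AlgHom.commutes]
    have : algebraMap k (Module.End k V) e = e • (1 : Module.End k V) := by congr 1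
    rw [this, smul_mul_assoc, one_mul]
  -- the basic commutation relation, applied
  have hrel : ∀ (f : MvPolynomial (Fin n) k) (y : V), (ρ (s f)) (T y) = T ((ρ f) y) - c • (ρ (Δ f)) y := by
    intro f y
    have h3 := congrArg (fun Q : Module.End k V => Q y) (hT f)
    simp only [LinearMap.sub_apply, Module.End.mul_apply, LinearMap.smul_apply] at h3
    rw [sub_eq_iff_eq_add] at h3
    rw [h3]
    abel
  -- commutation of operators
  have hcomm : ∀ (f g : MvPolynomial (Fin n) k) (e : k), Commute (ρ f - e • (1 : Module.End k V)) (ρ g) := by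
    intro f g e
    have h1 : Commute (ρ f) (ρ g) := by
      unfold Commute SemiconjBy; rw [← map_mul, ← map_mul, mul_comm]
    exact h1.sub_left ((Commute.one_left (ρ g)).smul_left e)
  have hcomm2 : ∀ (f g : MvPolynomial (Fin n) k) (e e' : k),
      Commute (ρ f - e • (1 : Module.End k V)) (ρ g - e' • (1 : Module.End k V)) := by
    intro f g e e'
    exact (hcomm f g e).sub_right ((Commute.one_right _).smul_right e')
  -- closure properties of genWt
  have powz : ∀ (Q : Module.End k V) (v : V) (m m' : ℕ), m ≤ m' → (Q ^ m) v = 0 →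
      (Q ^ m') v = 0 := by
    intro Q v m m' hle hm
    obtain ⟨t, rfl⟩ := Nat.exists_eq_add_of_le hle
    rw [add_comm, pow_add, Module.End.mul_apply, hm, map_zero]
  have memZero : ∀ lam' : MvPolynomial (Fin n) k →ₐ[k] k, (0 : V) ∈ genWt ρ lam' := by
    intro lam' f; exact ⟨0, by simp⟩
  have memAdd : ∀ (lam' : MvPolynomial (Fin n) k →ₐ[k] k) {v₁ v₂ : V}, v₁ ∈ genWt ρ lam' → v₂ ∈ genWt ρ lam' →
      v₁ + v₂ ∈ genWt ρ lam' := by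
    intro lam' v₁ v₂ h₁ h₂ f
    obtain ⟨m₁, hm₁⟩ := h₁ f
    obtain ⟨m₂, hm₂⟩ := h₂ f
    refine ⟨max m₁ m₂, ?_⟩
    rw [map_add, powz _ _ _ _ (le_max_left m₁ m₂) hm₁,
      powz _ _ _ _ (le_max_right m₁ m₂) hm₂, add_zero]
  have memSmul : ∀ (lam' : MvPolynomial (Fin n) k →ₐ[k] k) (e : k) {v : V}, v ∈ genWt ρ lam' →
      e • v ∈ genWt ρ lam' := by
    intro lam' e v hv f
    obtain ⟨m, hm⟩ := hv f
    exact ⟨m, by rw [map_smul, hm, smul_zero]⟩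
  have memSub : ∀ (lam' : MvPolynomial (Fin n) k →ₐ[k] k) {v₁ v₂ : V}, v₁ ∈ genWt ρ lam' → v₂ ∈ genWt ρ lam' →
      v₁ - v₂ ∈ genWt ρ lam' := by
    intro lam' v₁ v₂ h₁ h₂
    have := memAdd lam' h₁ (memSmul lam' (-1) h₂)
    simpa [sub_eq_add_neg] using this
  have memApply : ∀ (lam' : MvPolynomial (Fin n) k →ₐ[k] k) (g : MvPolynomial (Fin n) k) {v : V}, v ∈ genWt ρ lam' →
      (ρ g) v ∈ genWt ρ lam' := by
    intro lam' g v hv f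
    obtain ⟨m, hm⟩ := hv f
    refine ⟨m, ?_⟩
    rw [← Module.End.mul_apply, (((hcomm f g (lam' f)).pow_left m).eq), Module.End.mul_apply,
      hm, map_zero]
  have memShiftPow : ∀ (lam' : MvPolynomial (Fin n) k →ₐ[k] k) (h : MvPolynomial (Fin n) k) (e : k) (p : ℕ) {v : V}, v ∈ genWt ρ lam' →
      (((ρ h - e • (1 : Module.End k V)) ^ p)) v ∈ genWt ρ lam' := by
    intro lam' h e p
    induction p with
    | zero => intro v hv; simpa using hv
    | succ p ih =>
        intro v hv
        rw [pow_succ', Module.End.mul_apply]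
        have h3 : (ρ h - e • (1 : Module.End k V)) (((ρ h - e • 1) ^ p) v)
            = (ρ h) (((ρ h - e • 1) ^ p) v) - e • (((ρ h - e • 1) ^ p) v) := by
          simp [LinearMap.sub_apply]
        rw [h3]
        exact memSub lam' (memApply lam' h (ih hv)) (memSmul lam' e (ih hv))
  -- key iterated commutation identity
  have keyC : ∀ (f : MvPolynomial (Fin n) k) (x : V) (m : ℕ), ∃ g : MvPolynomial (Fin n) k,
      ((ρ (s f) - lam f • (1 : Module.End k V)) ^ m) (T x)
        = T ((ρ ((f - algebraMap k (MvPolynomial (Fin n) k) (lam f)) ^ m)) x) + (ρ g) x := by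
    intro f x m
    induction m with
    | zero => exact ⟨0, by simp⟩
    | succ m ih =>
        obtain ⟨g, hg⟩ := ih
        refine ⟨(s f - algebraMap k (MvPolynomial (Fin n) k) (lam f)) * g
          - algebraMap k (MvPolynomial (Fin n) k) c *
            (Δ f * (f - algebraMap k (MvPolynomial (Fin n) k) (lam f)) ^ m), ?_⟩
        rw [pow_succ', Module.End.mul_apply, hg, map_add]
        have E1 : (ρ (s f) - lam f • (1 : Module.End k V))
            (T ((ρ ((f - algebraMap k (MvPolynomial (Fin n) k) (lam f)) ^ m)) x))
            = T ((ρ ((f - algebraMap k (MvPolynomial (Fin n) k) (lam f)) ^ (m + 1))) x)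
              - (ρ (algebraMap k (MvPolynomial (Fin n) k) c *
                  (Δ f * (f - algebraMap k (MvPolynomial (Fin n) k) (lam f)) ^ m))) x := by
          rw [LinearMap.sub_apply, LinearMap.smul_apply, Module.End.one_apply, hrel]
          rw [← map_smul T, sub_right_comm, ← map_sub T]
          congr 1
          · congr 1
            rw [pow_succ']
            rw [map_mul, Module.End.mul_apply, hsub]
            rw [LinearMap.sub_apply, LinearMap.smul_apply, Module.End.one_apply]
          · rw [hCalg, map_mul]
            simp [Module.End.mul_apply]
        have E2 : (ρ (s f) - lam f • (1 : Module.End k V)) ((ρ g) x)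
            = (ρ ((s f - algebraMap k (MvPolynomial (Fin n) k) (lam f)) * g)) x := by
          rw [map_mul, hsub, Module.End.mul_apply]
        rw [E1, E2, map_sub, LinearMap.sub_apply]
        abel
  -- weight-moving : powers of (ρ h - μ h) send T v into ρ(A) v
  have keyD : ∀ (h : MvPolynomial (Fin n) k) (v : V), v ∈ genWt ρ lam →
      ∃ (p : ℕ) (g : MvPolynomial (Fin n) k),
        ((ρ h - μA h • (1 : Module.End k V)) ^ p) (T v) = (ρ g) v := by
    intro h v hv
    obtain ⟨m, hm⟩ := hv (s h)
    obtain ⟨g, hg⟩ := keyC (s h) v m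
    rw [hinv h] at hg
    refine ⟨m, g, ?_⟩
    rw [hμ h, hg]
    have h4 : (ρ ((s h - algebraMap k (MvPolynomial (Fin n) k) (lam (s h))) ^ m)) v = 0 := by
      rw [map_pow, hsub]
      exact hm
    rw [h4, map_zero, zero_add]
  -- the scalar gap
  have hd : lam f₁ - μA f₁ ≠ 0 := by
    rw [hμ f₁]
    exact sub_ne_zero.mpr (Ne.symm hf₁)
  have hP : ρ f₁ - μA f₁ • (1 : Module.End k V)
      = (ρ f₁ - lam f₁ • (1 : Module.End k V)) + (lam f₁ - μA f₁) • 1 := by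
    rw [sub_smul]
    abel
  -- injectivity of powers of (ρ f₁ - μA f₁) on the lam weight space
  have L2 : ∀ x : V, x ∈ genWt ρ lam → ∀ m : ℕ,
      ((ρ f₁ - μA f₁ • (1 : Module.End k V)) ^ m) x = 0 → x = 0 := by
    intro x hx m hm
    obtain ⟨p, hp⟩ := hx f₁
    rw [hP] at hm
    exact nilp_coprime _ _ hd p m x hp hm
  -- surjectivity : single step
  have L1s : ∀ (r : ℕ) (z : V), z ∈ genWt ρ lam →
      ((ρ f₁ - lam f₁ • (1 : Module.End k V)) ^ r) z = 0 →
      ∃ w, w ∈ genWt ρ lam ∧ (ρ f₁ - μA f₁ • (1 : Module.End k V)) w = z := by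
    intro r
    induction r with
    | zero =>
        intro z hz h0
        have hz0 : z = 0 := by simpa using h0
        exact ⟨0, memZero lam, by rw [map_zero, hz0]⟩
    | succ r ih =>
        intro z hz h0
        have hNmem : (ρ f₁ - lam f₁ • (1 : Module.End k V)) z ∈ genWt ρ lam := by
          have h5 : (ρ f₁ - lam f₁ • (1 : Module.End k V)) z = (ρ f₁) z - lam f₁ • z := by
            simp [LinearMap.sub_apply]
          rw [h5]
          exact memSub lam (memApply lam f₁ hz) (memSmul lam _ hz)
        have h0' : ((ρ f₁ - lam f₁ • (1 : Module.End k V)) ^ r)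
            ((ρ f₁ - lam f₁ • (1 : Module.End k V)) z) = 0 := by
          rw [← Module.End.mul_apply, ← pow_succ]
          exact h0
        obtain ⟨w', hw', hPw'⟩ := ih _ hNmem h0'
        refine ⟨(lam f₁ - μA f₁)⁻¹ • (z - w'), memSmul lam _ (memSub lam hz hw'), ?_⟩
        rw [map_smul, map_sub, hPw']
        have hPz : (ρ f₁ - μA f₁ • (1 : Module.End k V)) z
            - (ρ f₁ - lam f₁ • (1 : Module.End k V)) z = (lam f₁ - μA f₁) • z := by
          simp only [LinearMap.sub_apply, LinearMap.smul_apply, Module.End.one_apply, sub_smul]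
          abel
        rw [hPz, smul_smul, inv_mul_cancel₀ hd, one_smul]
  -- surjectivity : all powers
  have L1 : ∀ (m : ℕ) (z : V), z ∈ genWt ρ lam →
      ∃ w, w ∈ genWt ρ lam ∧ ((ρ f₁ - μA f₁ • (1 : Module.End k V)) ^ m) w = z := by
    intro m
    induction m with
    | zero => intro z hz; exact ⟨z, hz, by simp⟩
    | succ m ih =>
        intro z hz
        obtain ⟨w₁, hw₁, hPw₁⟩ := ih z hz
        obtain ⟨r, hr⟩ := hw₁ f₁
        obtain ⟨w, hw, hPw⟩ := L1s r w₁ hw₁ hr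
        refine ⟨w, hw, ?_⟩
        rw [pow_succ, Module.End.mul_apply, hPw, hPw₁]
  -- main decomposition existence
  have main : ∀ v : V, v ∈ genWt ρ lam →
      ∃ w, w ∈ genWt ρ lam ∧ (T v - w) ∈ genWt ρ μA := by
    intro v hv
    obtain ⟨m, g, hmg⟩ := keyD f₁ v hv
    obtain ⟨w, hw, hPw⟩ := L1 m ((ρ g) v) (memApply lam g hv)
    refine ⟨w, hw, ?_⟩
    intro h
    obtain ⟨p, g', hpg⟩ := keyD h v hv
    refine ⟨p, ?_⟩
    have hy : ((ρ h - μA h • (1 : Module.End k V)) ^ p) (T v - w) ∈ genWt ρ lam := by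
      rw [map_sub, hpg]
      exact memSub lam (memApply lam g' hv) (memShiftPow lam h (μA h) p hw)
    apply L2 _ hy m
    have hcc : ((ρ f₁ - μA f₁ • (1 : Module.End k V)) ^ m) * ((ρ h - μA h • 1) ^ p)
        = ((ρ h - μA h • 1) ^ p) * ((ρ f₁ - μA f₁ • 1) ^ m) :=
      ((hcomm2 f₁ h (μA f₁) (μA h)).pow_pow m p).eq
    rw [← Module.End.mul_apply, hcc, Module.End.mul_apply, map_sub, hmg, hPw, sub_self, map_zero]
  -- uniqueness of the decomposition
  have uniq : ∀ w u w' u' : V, w ∈ genWt ρ lam → u ∈ genWt ρ μA → w' ∈ genWt ρ lam →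
      u' ∈ genWt ρ μA → w + u = w' + u' → w = w' := by
    intro w u w' u' hw hu hw' hu' heq
    have h9 : w - w' = u' - u := by
      rw [sub_eq_sub_iff_add_eq_add, heq, add_comm]
    have hx1 : w - w' ∈ genWt ρ lam := memSub lam hw hw'
    have hx2 : w - w' ∈ genWt ρ μA := by rw [h9]; exact memSub μA hu' hu
    obtain ⟨q, hq⟩ := hx2 f₁
    have := L2 _ hx1 q hq
    exact sub_eq_zero.mp this
  -- choose the components
  have main2 : ∀ v : V, ∃ w, v ∈ genWt ρ lam →
      (w ∈ genWt ρ lam ∧ (T v - w) ∈ genWt ρ μA) := by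
    intro v
    by_cases hv : v ∈ genWt ρ lam
    · obtain ⟨w, hw1, hw2⟩ := main v hv
      exact ⟨w, fun _ => ⟨hw1, hw2⟩⟩
    · exact ⟨0, fun h => absurd h hv⟩
  choose W hW using main2
  -- the component map intertwines
  have star : ∀ v : V, v ∈ genWt ρ lam → ∀ f : MvPolynomial (Fin n) k,
      W ((ρ f) v) = (ρ (s f)) (W v) + c • (ρ (Δ f)) v := by
    intro v hv f
    have hv' : (ρ f) v ∈ genWt ρ lam := memApply lam f hv
    have hrelv : T ((ρ f) v) = (ρ (s f)) (T v) + c • (ρ (Δ f)) v := by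
      rw [hrel f v]
      abel
    refine uniq (W ((ρ f) v)) (T ((ρ f) v) - W ((ρ f) v))
      ((ρ (s f)) (W v) + c • (ρ (Δ f)) v) ((ρ (s f)) (T v - W v))
      (hW _ hv').1 (hW _ hv').2
      (memAdd lam (memApply lam (s f) (hW v hv).1) (memSmul lam c (memApply lam (Δ f) hv)))
      (memApply μA (s f) (hW v hv).2) ?_
    rw [add_sub_cancel, hrelv, map_sub]
    abel
  have hW0 : W 0 = 0 := by
    refine uniq (W 0) (T 0 - W 0) 0 0 (hW 0 (memZero lam)).1 (hW 0 (memZero lam)).2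
      (memZero lam) (memZero μA) ?_
    rw [add_sub_cancel, map_zero, add_zero]
  -- the exact eigen-equation for the lam component
  have final : ∀ v : V, v ∈ genWt ρ lam → (ρ (symEmb k n α)) (W v) = c • v := by
    intro v hv
    obtain ⟨r, hr⟩ := hv f₁
    have hfv : (ρ ((f₁ - algebraMap k (MvPolynomial (Fin n) k) (lam f₁)) ^ r)) v = 0 := by
      rw [map_pow, hsub]
      exact hr
    have hstar := star v hv ((f₁ - algebraMap k (MvPolynomial (Fin n) k) (lam f₁)) ^ r)
    rw [hfv, hW0] at hstar
    -- hstar : 0 = ρ (s f^r) (W v) + c • ρ (Δ (f^r)) v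
    have h11 : (ρ (s ((f₁ - algebraMap k (MvPolynomial (Fin n) k) (lam f₁)) ^ r)))
        ((ρ (symEmb k n α)) (W v) - c • v) = 0 := by
      have hcom : (ρ (symEmb k n α)) ((ρ (s ((f₁ - algebraMap k (MvPolynomial (Fin n) k)
          (lam f₁)) ^ r))) (W v))
          = (ρ (s ((f₁ - algebraMap k (MvPolynomial (Fin n) k) (lam f₁)) ^ r)))
            ((ρ (symEmb k n α)) (W v)) := by
        rw [← Module.End.mul_apply, ← map_mul, mul_comm, map_mul, Module.End.mul_apply]
      have haΔ : (ρ (symEmb k n α))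
          ((ρ (Δ ((f₁ - algebraMap k (MvPolynomial (Fin n) k) (lam f₁)) ^ r))) v)
          = - (ρ (s ((f₁ - algebraMap k (MvPolynomial (Fin n) k) (lam f₁)) ^ r))) v := by
        rw [← Module.End.mul_apply, ← map_mul, hΔ, map_sub, LinearMap.sub_apply, hfv, zero_sub]
      rw [map_sub, map_smul, ← hcom]
      have h12 := congrArg (fun z => (ρ (symEmb k n α)) z) hstar
      simp only [map_zero, map_add, map_smul] at h12
      rw [haΔ, smul_neg] at h12
      rw [← sub_eq_add_neg] at h12
      exact h12.symm
    have hx : (ρ (symEmb k n α)) (W v) - c • v ∈ genWt ρ lam :=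
      memSub lam (memApply lam _ (hW v hv).1) (memSmul lam c hv)
    have hsf : ρ (s ((f₁ - algebraMap k (MvPolynomial (Fin n) k) (lam f₁)) ^ r))
        = (ρ (s f₁) - lam f₁ • (1 : Module.End k V)) ^ r := by
      rw [map_pow, map_sub, AlgEquiv.commutes, map_pow, hsub]
    have hE : ρ (s f₁) - lam f₁ • (1 : Module.End k V)
        = (ρ (s f₁) - lam (s f₁) • (1 : Module.End k V)) + (lam (s f₁) - lam f₁) • 1 := by
      rw [sub_smul]
      abel
    rw [hsf, hE] at h11
    obtain ⟨q, hq⟩ := hx (s f₁)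
    have hd2 : lam (s f₁) - lam f₁ ≠ 0 := sub_ne_zero.mpr hf₁
    have := nilp_coprime _ _ hd2 q r _ hq h11
    exact sub_eq_zero.mp this
  -- conclusion
  refine ⟨hla, fun v hv => ⟨W v, (hW v hv).1, T v - W v, (hW v hv).2, ?_, final v hv⟩⟩
  abel
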